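/- arXiv:1812.01607 — 5 statements merged into one kernel-verified Lean document; each statement's English description precedes it below -/
import Mathlib

section
/- A linear map T : Mₙ(ℂ) → Mₙ(ℂ) is completely positive if and only if for every k ∈ ℕ and all a₁,…,a_k, b₁,…,b_k ∈ Mₙ(ℂ), the sum ∑_{i,j} Tr(T(aᵢ* aⱼ)·(bᵢ* bⱼ)ᵗ) is nonnegative, where (·)ᵗ denotes transpose. -/
open scoped ComplexOrder Matrix

/-- The action of `id_{M_k} ⊗ T` on `M_k(Mₙ(ℂ))`, applying `T` blockwise. -/
def mapBlocks {n : ℕ} (k : ℕ)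
    (T : Matrix (Fin n) (Fin n) ℂ →ₗ[ℂ] Matrix (Fin n) (Fin n) ℂ)
    (M : Matrix (Fin k × Fin n) (Fin k × Fin n) ℂ) :
    Matrix (Fin k × Fin n) (Fin k × Fin n) ℂ :=
  Matrix.of fun p q => T (Matrix.of fun a b => M (p.1, a) (q.1, b)) p.2 q.2

/-- `T` is completely positive: `id_{M_k} ⊗ T` is positive for every `k`. -/
def IsCompletelyPositive {n : ℕ}
    (T : Matrix (Fin n) (Fin n) ℂ →ₗ[ℂ] Matrix (Fin n) (Fin n) ℂ) : Prop :=
  ∀ (k : ℕ) (M : Matrix (Fin k × Fin n) (Fin k × Fin n) ℂ),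
    M.PosSemidef → (mapBlocks k T M).PosSemidef

namespace CPAux

/-- Matrix with `v` in "row 0" (if any) and zeros elsewhere. -/
def rowM {n : ℕ} (v : Fin n → ℂ) : Matrix (Fin n) (Fin n) ℂ :=
  Matrix.of fun c x => if c.val = 0 then v x else 0

lemma rowM_mul {n : ℕ} (u v : Fin n → ℂ) (x y : Fin n) :
    ((rowM u)ᴴ * rowM v) x y = star (u x) * v y := by
  classical
  simp only [Matrix.mul_apply, Matrix.conjTranspose_apply, rowM, Matrix.of_apply]
  have h0 : (0:ℕ) < n := x.pos
  rw [Finset.sum_eq_single (⟨0, h0⟩ : Fin n)]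
  · simp
  · intro c _ hc
    have : c.val ≠ 0 := fun h => hc (Fin.ext h)
    simp [this]
  · simp

lemma trace_mul_transpose {n : ℕ} (X Y : Matrix (Fin n) (Fin n) ℂ) :
    (X * Yᵀ).trace = ∑ x, ∑ y, X x y * Y x y := by
  simp [Matrix.trace, Matrix.diag, Matrix.mul_apply, Matrix.transpose_apply]

def eVec {n : ℕ} (x : Fin n) : Fin n → ℂ := fun a => if a = x then 1 else 0

lemma entry_eq_trace {n : ℕ} (X : Matrix (Fin n) (Fin n) ℂ) (x y : Fin n) :
    X x y = (X * ((rowM (eVec x))ᴴ * rowM (eVec y))ᵀ).trace := by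
  rw [trace_mul_transpose]
  simp only [rowM_mul, eVec]
  simp [apply_ite, mul_ite, mul_one, mul_zero, Finset.sum_ite_eq']

lemma sum_comm3 {β δ ε M : Type*} [AddCommMonoid M] [Fintype β] [Fintype δ] [Fintype ε]
    (g : β → δ → ε → M) :
    ∑ j, ∑ y, ∑ c, g j y c = ∑ c, ∑ j, ∑ y, g j y c := by
  rw [show (∑ j, ∑ y, ∑ c, g j y c) = ∑ j, ∑ c, ∑ y, g j y c from
    Finset.sum_congr rfl fun j _ => Finset.sum_comm, Finset.sum_comm]

lemma sum_comm5 {α β γ δ ε M : Type*} [AddCommMonoid M]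
    [Fintype α] [Fintype β] [Fintype γ] [Fintype δ] [Fintype ε]
    (f : α → β → γ → δ → ε → M) :
    ∑ i, ∑ j, ∑ x, ∑ y, ∑ c, f i j x y c = ∑ c, ∑ i, ∑ x, ∑ j, ∑ y, f i j x y c := by
  have s1 : ∀ i, (∑ j, ∑ x, ∑ y, ∑ c, f i j x y c) = ∑ c, ∑ j, ∑ x, ∑ y, f i j x y c := by
    intro i
    rw [show (∑ j, ∑ x, ∑ y, ∑ c, f i j x y c) = ∑ j, ∑ c, ∑ x, ∑ y, f i j x y c from
      Finset.sum_congr rfl fun j _ => sum_comm3 _, Finset.sum_comm]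
  rw [show (∑ i, ∑ j, ∑ x, ∑ y, ∑ c, f i j x y c)
      = ∑ i, ∑ c, ∑ j, ∑ x, ∑ y, f i j x y c from Finset.sum_congr rfl fun i _ => s1 i,
    Finset.sum_comm]
  exact Finset.sum_congr rfl fun c _ => Finset.sum_congr rfl fun i _ => Finset.sum_comm

lemma kernel_hermitian {n : ℕ} (T : Matrix (Fin n) (Fin n) ℂ →ₗ[ℂ] Matrix (Fin n) (Fin n) ℂ)
    (H : ∀ (k : ℕ) (a b : Fin k → Matrix (Fin n) (Fin n) ℂ),
      0 ≤ ∑ i, ∑ j, (T ((a i)ᴴ * a j) * ((b i)ᴴ * b j)ᵀ).trace)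
    (a₁ b₁ a₂ b₂ : Matrix (Fin n) (Fin n) ℂ) :
    (T (a₁ᴴ * a₂) * (b₁ᴴ * b₂)ᵀ).trace
      = (starRingEnd ℂ) ((T (a₂ᴴ * a₁) * (b₂ᴴ * b₁)ᵀ).trace) := by
  have him : ∀ (a b : Fin 2 → Matrix (Fin n) (Fin n) ℂ),
      (∑ i, ∑ j, (T ((a i)ᴴ * a j) * ((b i)ᴴ * b j)ᵀ).trace).im = 0 := by
    intro a b
    exact ((Complex.le_def.mp (H 2 a b)).2).symm
  have h2 := him ![a₁, a₂] ![b₁, b₂]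
  have h3 := him ![a₁, Complex.I • a₂] ![b₁, b₂]
  simp only [Fin.sum_univ_two, Matrix.cons_val_zero, Matrix.cons_val_one, Matrix.head_cons,
    Matrix.conjTranspose_smul, Matrix.smul_mul, Matrix.mul_smul, map_smul,
    Matrix.trace_smul, smul_smul, smul_eq_mul, Complex.star_def, Complex.conj_I] at h2 h3
  set u := (T (a₁ᴴ * a₂) * (b₁ᴴ * b₂)ᵀ).trace with hu
  set v := (T (a₂ᴴ * a₁) * (b₂ᴴ * b₁)ᵀ).trace with hv
  set w := (T (a₁ᴴ * a₁) * (b₁ᴴ * b₁)ᵀ).trace with hw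
  set z := (T (a₂ᴴ * a₂) * (b₂ᴴ * b₂)ᵀ).trace with hz
  have hw0 : w.im = 0 := by
    have := him ![a₁, a₁] ![b₁, b₁]
    simp only [Fin.sum_univ_two, Matrix.cons_val_zero, Matrix.cons_val_one,
      Matrix.head_cons] at this
    rw [← hw] at this
    simpa using this
  have hz0 : z.im = 0 := by
    have := him ![a₂, a₂] ![b₂, b₂]
    simp only [Fin.sum_univ_two, Matrix.cons_val_zero, Matrix.cons_val_one,
      Matrix.head_cons] at this
    rw [← hz] at this
    simpa using this
  simp only [Complex.add_im, Complex.neg_im, Complex.mul_im, Complex.mul_re,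
    Complex.I_re, Complex.I_im, Complex.neg_re, hw0, hz0] at h2 h3
  apply Complex.ext
  · rw [Complex.conj_re]; linarith
  · rw [Complex.conj_im]; linarith

end CPAux

open CPAux in
/-- `T` is completely positive iff for every `k` and all `a₁,…,a_k, b₁,…,b_k`,
`∑_{i,j} Tr(T(aᵢ* aⱼ)·(bᵢ* bⱼ)ᵗ) ≥ 0`. -/
theorem completelyPositive_iff_trace_sum_nonneg (n : ℕ)
    (T : Matrix (Fin n) (Fin n) ℂ →ₗ[ℂ] Matrix (Fin n) (Fin n) ℂ) :
    IsCompletelyPositive T ↔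
    (∀ (k : ℕ) (a b : Fin k → Matrix (Fin n) (Fin n) ℂ),
      0 ≤ ∑ i, ∑ j, (T ((a i)ᴴ * a j) * ((b i)ᴴ * b j)ᵀ).trace) := by
  constructor
  · -- forward direction
    intro hT k a b
    classical
    set A : Matrix (Fin n) (Fin k × Fin n) ℂ := Matrix.of fun c p => a p.1 c p.2 with hA
    have hM : (Aᴴ * A).PosSemidef := Matrix.posSemidef_conjTranspose_mul_self A
    have hP := hT k _ hM
    have hPent : ∀ p q : Fin k × Fin n,
        (mapBlocks k T (Aᴴ * A)) p q = T ((a p.1)ᴴ * a q.1) p.2 q.2 := by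
      intro p q
      show T (Matrix.of fun x y => (Aᴴ * A) (p.1, x) (q.1, y)) p.2 q.2 = _
      have hbl : (Matrix.of fun x y => (Aᴴ * A) (p.1, x) (q.1, y)) = (a p.1)ᴴ * a q.1 := by
        ext x y
        simp [hA, Matrix.mul_apply, Matrix.conjTranspose_apply]
      rw [hbl]
    have key : ∑ i, ∑ j, (T ((a i)ᴴ * a j) * ((b i)ᴴ * b j)ᵀ).trace
        = ∑ c : Fin n, dotProduct (star fun p : Fin k × Fin n => b p.1 c p.2)
            ((mapBlocks k T (Aᴴ * A)) *ᵥ fun p => b p.1 c p.2) := by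
      have lhs_eq : ∑ i, ∑ j, (T ((a i)ᴴ * a j) * ((b i)ᴴ * b j)ᵀ).trace
          = ∑ i, ∑ j, ∑ x, ∑ y, ∑ c,
              star (b i c x) * T ((a i)ᴴ * a j) x y * b j c y := by
        refine Finset.sum_congr rfl fun i _ => Finset.sum_congr rfl fun j _ => ?_
        rw [trace_mul_transpose]
        refine Finset.sum_congr rfl fun x _ => Finset.sum_congr rfl fun y _ => ?_
        rw [Matrix.mul_apply, Finset.mul_sum]
        refine Finset.sum_congr rfl fun c _ => ?_
        simp only [Matrix.conjTranspose_apply]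
        ring
      rw [lhs_eq, sum_comm5]
      refine Finset.sum_congr rfl fun c _ => ?_
      rw [dotProduct, Fintype.sum_prod_type]
      refine Finset.sum_congr rfl fun i _ => Finset.sum_congr rfl fun x _ => ?_
      rw [Matrix.mulVec, Pi.star_apply, dotProduct, Fintype.sum_prod_type,
        Finset.mul_sum]
      refine Finset.sum_congr rfl fun j _ => ?_
      rw [Finset.mul_sum]
      refine Finset.sum_congr rfl fun y _ => ?_
      rw [hPent]
      ring
    rw [key]
    exact Finset.sum_nonneg fun c _ => hP.dotProduct_mulVec_nonneg _
  · -- reverse direction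
    intro H k M hM
    classical
    obtain ⟨N, rfl⟩ : ∃ N : Matrix (Fin k × Fin n) (Fin k × Fin n) ℂ, M = Nᴴ * N := by
      open MatrixOrder in
      obtain ⟨X, hX, -, hXM⟩ :=
        CFC.exists_sqrt_of_isSelfAdjoint_of_quasispectrumRestricts hM.isHermitian
          (QuasispectrumRestricts.nnreal_of_nonneg hM.nonneg)
      refine ⟨X, ?_⟩
      rw [← hXM]
      congr 1
      exact hX.star_eq.symm
    set A : (Fin k × Fin n) → Fin k → Matrix (Fin n) (Fin n) ℂ :=
      fun r i => rowM (fun x => N r (i, x)) with hAdef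
    have hPent : ∀ p q : Fin k × Fin n,
        (mapBlocks k T (Nᴴ * N)) p q = ∑ r, T ((A r p.1)ᴴ * A r q.1) p.2 q.2 := by
      intro p q
      show T (Matrix.of fun x y => (Nᴴ * N) (p.1, x) (q.1, y)) p.2 q.2 = _
      have hbl : (Matrix.of fun x y => (Nᴴ * N) (p.1, x) (q.1, y))
          = ∑ r, (A r p.1)ᴴ * A r q.1 := by
        ext x y
        rw [Matrix.sum_apply]
        simp only [hAdef, rowM_mul, Matrix.of_apply]
        rw [Matrix.mul_apply]
        simp only [Matrix.conjTranspose_apply]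
      rw [hbl, map_sum, Matrix.sum_apply]
    refine Matrix.PosSemidef.of_dotProduct_mulVec_nonneg ?_ ?_
    · -- Hermitian
      ext p q
      rw [Matrix.conjTranspose_apply, hPent, hPent, star_sum]
      refine Finset.sum_congr rfl fun r _ => ?_
      rw [entry_eq_trace (T ((A r p.1)ᴴ * A r q.1)) p.2 q.2,
        entry_eq_trace (T ((A r q.1)ᴴ * A r p.1)) q.2 p.2,
        kernel_hermitian T H (A r q.1) (rowM (eVec q.2)) (A r p.1) (rowM (eVec p.2))]
      exact Complex.conj_conj _
    · -- positivity
      intro v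
      set B : Fin k → Matrix (Fin n) (Fin n) ℂ := fun i => rowM (fun x => v (i, x)) with hB
      have key : dotProduct (star v) ((mapBlocks k T (Nᴴ * N)) *ᵥ v)
          = ∑ r, ∑ i, ∑ j, (T ((A r i)ᴴ * A r j) * ((B i)ᴴ * B j)ᵀ).trace := by
        have lhs_eq : dotProduct (star v) ((mapBlocks k T (Nᴴ * N)) *ᵥ v)
            = ∑ i, ∑ x, ∑ j, ∑ y, ∑ r,
                star (v (i, x)) * T ((A r i)ᴴ * A r j) x y * v (j, y) := by
          rw [dotProduct, Fintype.sum_prod_type]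
          refine Finset.sum_congr rfl fun i _ => Finset.sum_congr rfl fun x _ => ?_
          rw [Matrix.mulVec, Pi.star_apply, dotProduct, Fintype.sum_prod_type,
            Finset.mul_sum]
          refine Finset.sum_congr rfl fun j _ => ?_
          rw [Finset.mul_sum]
          refine Finset.sum_congr rfl fun y _ => ?_
          rw [hPent, Finset.sum_mul, Finset.mul_sum]
          refine Finset.sum_congr rfl fun r _ => ?_
          ring
        rw [lhs_eq, sum_comm5]
        refine Finset.sum_congr rfl fun r _ => ?_
        -- now: ∑ i, ∑ j, ∑ x, ∑ y, ... = ∑ i, ∑ j, trace ...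
        refine Finset.sum_congr rfl fun i _ => ?_
        refine Finset.sum_congr rfl fun j _ => ?_
        rw [trace_mul_transpose]
        refine Finset.sum_congr rfl fun x _ => Finset.sum_congr rfl fun y _ => ?_
        simp only [hB, rowM_mul]
        ring
      rw [key]
      refine Finset.sum_nonneg fun r _ => H k (A r) B
end

section
/- For vectors f₁,…,f_k, g₁,…,g_k in a finite-dimensional Hilbert space H, the map T : B(H) → B(H) given by T(a) = ∑_k V_k* a V_k with V_k = |f_k⟩⟨g_k| (rank-one operators) satisfies: for any a₁,…,aₙ, ρ₁,…,ρₙ ∈ B(H) with ∑ᵢ aᵢ ⊗ ρᵢ positive on all simple tensors of H⊗H (i.e., ⟨f⊗g, (∑ᵢ aᵢ⊗ρᵢ)(f⊗g)⟩ ≥ 0 for all f,g ∈ H), one has ∑ᵢ Tr(T(aᵢ)ρᵢ) ≥ 0. -/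
open scoped ComplexOrder Matrix Kronecker

/-- The rank-one operator `|f⟩⟨g| : x ↦ ⟨g,x⟩f` as a matrix. -/
def rankOne {d : ℕ} (f g : Fin d → ℂ) : Matrix (Fin d) (Fin d) ℂ :=
  Matrix.vecMulVec f (star g)

/-- The simple tensor `f ⊗ g` as a vector on `H ⊗ H`. -/
def simpleTensor {d : ℕ} (f g : Fin d → ℂ) : Fin d × Fin d → ℂ :=
  fun p => f p.1 * g p.2

lemma sum_mulVec_aux {d n : ℕ} (M : Fin n → Matrix (Fin d × Fin d) (Fin d × Fin d) ℂ)
    (x : Fin d × Fin d → ℂ) : (∑ i, M i) *ᵥ x = ∑ i, M i *ᵥ x := by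
  ext j
  simp only [Matrix.mulVec, dotProduct, Finset.sum_apply, Finset.sum_apply', Matrix.sum_apply,
    Finset.sum_mul]
  rw [Finset.sum_comm]

lemma dot_sum_aux {d n : ℕ} (v : Fin d × Fin d → ℂ) (w : Fin n → (Fin d × Fin d → ℂ)) :
    v ⬝ᵥ (∑ i, w i) = ∑ i, v ⬝ᵥ w i := by
  simp only [dotProduct, Finset.sum_apply, Finset.sum_apply', Finset.mul_sum]
  rw [Finset.sum_comm]

lemma trace_rankOne_aux {d : ℕ} (f g : Fin d → ℂ) (a ρ : Matrix (Fin d) (Fin d) ℂ) :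
    ((rankOne f g)ᴴ * a * rankOne f g * ρ).trace
      = (star f ⬝ᵥ (a *ᵥ f)) * (star g ⬝ᵥ (ρ *ᵥ g)) := by
  simp only [rankOne, Matrix.trace, Matrix.diag, Matrix.mul_apply, Matrix.vecMulVec_apply,
    dotProduct, Matrix.mulVec, Matrix.conjTranspose_apply, Finset.mul_sum,
    Finset.sum_mul, star_mul', Pi.star_apply, RCLike.star_def, starRingEnd_self_apply]
  rw [Finset.sum_comm]
  refine Finset.sum_congr rfl fun x _ => ?_
  rw [Finset.sum_comm]
  conv_lhs => enter [2, z]; rw [Finset.sum_comm]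
  rw [Finset.sum_comm]
  conv_lhs => enter [2, z]; rw [Finset.sum_comm]
  rw [Finset.sum_comm]
  conv_lhs => enter [2, z]; rw [Finset.sum_comm]
  conv_lhs => enter [2, y]; rw [Finset.sum_comm]
  refine Finset.sum_congr rfl fun y _ => Finset.sum_congr rfl fun z _ =>
    Finset.sum_congr rfl fun w _ => by ring

lemma kron_simpleTensor_aux {d : ℕ} (u v : Fin d → ℂ) (a ρ : Matrix (Fin d) (Fin d) ℂ) :
    star (simpleTensor u v) ⬝ᵥ ((a ⊗ₖ ρ) *ᵥ simpleTensor u v)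
      = (star u ⬝ᵥ (a *ᵥ u)) * (star v ⬝ᵥ (ρ *ᵥ v)) := by
  simp only [simpleTensor, dotProduct, Matrix.mulVec, Matrix.kroneckerMap_apply,
    Fintype.sum_prod_type, Finset.mul_sum, Finset.sum_mul, Pi.star_apply, RCLike.star_def,
    star_mul']
  rw [Finset.sum_comm]
  refine Finset.sum_congr rfl fun x _ => ?_
  rw [Finset.sum_comm]
  conv_lhs => enter [2, z]; rw [Finset.sum_comm]
  rw [Finset.sum_comm]
  conv_lhs => enter [2, y]; rw [Finset.sum_comm]
  refine Finset.sum_congr rfl fun y _ => Finset.sum_congr rfl fun z _ =>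
    Finset.sum_congr rfl fun w _ => by ring

/-- For `T(a) = ∑_k V_k* a V_k` with rank-one `V_k = |f_k⟩⟨g_k|`: if
`∑ᵢ aᵢ ⊗ ρᵢ` is positive on all simple tensors of `H ⊗ H`, then
`∑ᵢ Tr(T(aᵢ)ρᵢ) ≥ 0`. -/
theorem rankOne_kraus_st_positive (d K N : ℕ) (f g : Fin K → (Fin d → ℂ))
    (T : Matrix (Fin d) (Fin d) ℂ → Matrix (Fin d) (Fin d) ℂ)
    (hT : ∀ a, T a = ∑ k, (rankOne (f k) (g k))ᴴ * a * rankOne (f k) (g k))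
    (a ρ : Fin N → Matrix (Fin d) (Fin d) ℂ)
    (hst : ∀ u v : Fin d → ℂ,
      0 ≤ star (simpleTensor u v) ⬝ᵥ ((∑ i, a i ⊗ₖ ρ i) *ᵥ simpleTensor u v)) :
    0 ≤ ∑ i, (T (a i) * ρ i).trace := by
  have key : ∑ i, (T (a i) * ρ i).trace
      = ∑ k, star (simpleTensor (f k) (g k)) ⬝ᵥ
          ((∑ i, a i ⊗ₖ ρ i) *ᵥ simpleTensor (f k) (g k)) := by
    simp_rw [hT, Finset.sum_mul, Matrix.trace_sum, sum_mulVec_aux, dot_sum_aux]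
    rw [Finset.sum_comm]
    exact Finset.sum_congr rfl fun k _ => Finset.sum_congr rfl fun i _ => by
      rw [trace_rankOne_aux, kron_simpleTensor_aux]
  rw [key]
  exact Finset.sum_nonneg fun k _ => hst (f k) (g k)
end

section
/- Let H = ℂ². If h ∈ H ⊗ H is a vector such that the partial transpose (id ⊗ t)(|h⟩⟨h|) is a positive semidefinite operator on H ⊗ H, then h is a simple tensor, i.e., h = f ⊗ g for some f, g ∈ H. -/
open scoped ComplexOrder Matrix

/-- The partial transpose (transpose on the second tensor factor) of an
operator on `H ⊗ H`, in Kronecker coordinates. -/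
def partialTranspose {d : ℕ}
    (M : Matrix (Fin d × Fin d) (Fin d × Fin d) ℂ) :
    Matrix (Fin d × Fin d) (Fin d × Fin d) ℂ :=
  Matrix.of fun p q => M (p.1, q.2) (q.1, p.2)

/-- The rank-one operator `|h⟩⟨h|` on `H ⊗ H`. -/
def rankOneProj {d : ℕ} (h : Fin d × Fin d → ℂ) :
    Matrix (Fin d × Fin d) (Fin d × Fin d) ℂ :=
  Matrix.vecMulVec h (star h)

/-- For `H = ℂ²`: if the partial transpose of `|h⟩⟨h|` is positive semidefinite,
then `h` is a simple tensor `f ⊗ g`. -/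
theorem partialTranspose_posSemidef_implies_simple
    (h : Fin 2 × Fin 2 → ℂ)
    (hpos : (partialTranspose (rankOneProj h)).PosSemidef) :
    ∃ f g : Fin 2 → ℂ, h = fun p => f p.1 * g p.2 := by
  set D : ℂ := h (0,0) * h (1,1) - h (0,1) * h (1,0) with hD
  have hdet : D = 0 := by
    set x : Fin 2 × Fin 2 → ℂ := fun p =>
      if p = (0,0) then -(starRingEnd ℂ) (h (1,0))
      else if p = (0,1) then -(starRingEnd ℂ) (h (1,1))
      else if p = (1,0) then (starRingEnd ℂ) (h (0,0))
      else (starRingEnd ℂ) (h (0,1)) with hx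
    have key := hpos.dotProduct_mulVec_nonneg x
    have hform : star x ⬝ᵥ (partialTranspose (rankOneProj h)) *ᵥ x
        = -2 * ((starRingEnd ℂ) D * D) := by
      simp [partialTranspose, rankOneProj, Matrix.vecMulVec, Matrix.mulVec,
        dotProduct, Fintype.sum_prod_type, Fin.sum_univ_two, hx, hD,
        Pi.star_apply, Prod.ext_iff, map_sub, map_mul]
      ring
    rw [hform] at key
    have h1 : (starRingEnd ℂ) D * D = (Complex.normSq D : ℂ) := by
      rw [Complex.normSq_eq_conj_mul_self]
    rw [h1] at key
    have h0 : (0:ℂ) ≤ ((-2 * Complex.normSq D : ℝ) : ℂ) := by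
      convert key using 2 <;> push_cast <;> ring
    rw [Complex.zero_le_real] at h0
    have h2 : Complex.normSq D = 0 :=
      le_antisymm (by nlinarith) (Complex.normSq_nonneg D)
    exact Complex.normSq_eq_zero.mp h2
  have hdet' : h (0,0) * h (1,1) = h (0,1) * h (1,0) := by
    have := hdet; rw [hD, sub_eq_zero] at this; exact this
  by_cases h00 : h (0,0) ≠ 0
  · refine ⟨![h (0,0), h (1,0)], ![1, h (0,1) / h (0,0)], ?_⟩
    funext p
    fin_cases p <;>
      simp only [Matrix.cons_val_zero, Matrix.cons_val_one, Matrix.head_cons, mul_one, one_mul,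
        mul_zero, zero_mul, Fin.mk_zero, Fin.mk_one]
    · show h (0,1) = _; rw [mul_div_assoc', mul_div_cancel_left₀ _ h00]
    · show h (1,1) = _
      rw [mul_div_assoc', mul_comm (h (1,0)), ← hdet', mul_div_cancel_left₀ _ h00]
  · push_neg at h00
    by_cases h01 : h (0,1) ≠ 0
    · have h10 : h (1,0) = 0 := by
        have : h (0,1) * h (1,0) = 0 := by rw [← hdet', h00, zero_mul]
        exact (mul_eq_zero.mp this).resolve_left h01
      refine ⟨![h (0,1), h (1,1)], ![0, 1], ?_⟩
      funext p
      fin_cases p <;>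
        simp only [Matrix.cons_val_zero, Matrix.cons_val_one, Matrix.head_cons, mul_one, one_mul,
          mul_zero, zero_mul, Fin.mk_zero, Fin.mk_one]
      · exact h00
      · exact h10
    · push_neg at h01
      refine ⟨![0, 1], ![h (1,0), h (1,1)], ?_⟩
      funext p
      fin_cases p <;>
        simp only [Matrix.cons_val_zero, Matrix.cons_val_one, Matrix.head_cons, mul_one, one_mul,
          mul_zero, zero_mul, Fin.mk_zero, Fin.mk_one]
      · exact h00
      · exact h01
end

section
/- A linear map T : Mₙ(ℂ) → Mₙ(ℂ) is completely positive if and only if for all a₁,…,a_k, c₁,…,c_k ∈ Mₙ(ℂ) and all g ∈ ℂⁿ, ∑_{i,j} ⟨cᵢ g, T(aᵢ* aⱼ) cⱼ g⟩ ≥ 0. -/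
open scoped ComplexOrder Matrix
open Matrix in
lemma star_quad_eq {m : Type*} [Fintype m] (A : Matrix m m ℂ)
    (h : ∀ x : m → ℂ, 0 ≤ star x ⬝ᵥ A *ᵥ x) (x y : m → ℂ) :
    star (star x ⬝ᵥ A *ᵥ y) = star y ⬝ᵥ A *ᵥ x := by
  have hre : ∀ z : m → ℂ, (starRingEnd ℂ) (star z ⬝ᵥ A *ᵥ z) = star z ⬝ᵥ A *ᵥ z := by
    intro z
    have := h z
    rw [Complex.le_def] at this
    rw [Complex.ext_iff]
    constructor
    · simp
    · simp [← this.2]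
  have expand : ∀ (c : ℂ) (u v : m → ℂ),
      star (u + c • v) ⬝ᵥ A *ᵥ (u + c • v) =
        star u ⬝ᵥ A *ᵥ u + c * (star u ⬝ᵥ A *ᵥ v) + (starRingEnd ℂ) c * (star v ⬝ᵥ A *ᵥ u)
          + (starRingEnd ℂ) c * c * (star v ⬝ᵥ A *ᵥ v) := by
    intro c u v
    simp only [star_add, star_smul, mulVec_add, mulVec_smul, dotProduct_add, add_dotProduct,
      dotProduct_smul, smul_dotProduct, smul_eq_mul, Complex.star_def]
    ring
  have e1 := hre (x + (1 : ℂ) • y)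
  have e2 := hre (x + Complex.I • y)
  rw [expand] at e1 e2
  simp only [map_add, _root_.map_mul, hre x, hre y, map_neg, neg_neg, neg_mul, mul_neg, RingHom.map_one, one_mul, mul_one, Complex.conj_I, Complex.conj_conj] at e1 e2
  show (starRingEnd ℂ) (star x ⬝ᵥ A *ᵥ y) = star y ⬝ᵥ A *ᵥ x
  set B1 := star x ⬝ᵥ A *ᵥ y
  set B2 := star y ⬝ᵥ A *ᵥ x
  linear_combination e1/2 + Complex.I * e2/2 +
    (((starRingEnd ℂ) B1 - (starRingEnd ℂ) B2 + B1 - B2)/2) * Complex.I_mul_I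

open Matrix in
lemma posSemidef_of_quadratic {m : Type*} [Fintype m] [DecidableEq m] (A : Matrix m m ℂ)
    (h : ∀ x : m → ℂ, 0 ≤ star x ⬝ᵥ A *ᵥ x) : A.PosSemidef := by
  refine Matrix.PosSemidef.of_dotProduct_mulVec_nonneg ?_ h
  ext i j
  have := star_quad_eq A h (Pi.single j 1) (Pi.single i 1)
  simpa [Matrix.conjTranspose_apply, Matrix.mulVec_single, dotProduct,
    Pi.single_apply, Finset.sum_ite_eq', apply_ite] using this

open Matrix in
lemma dotProduct_sum_mulVec {p : Type*} [Fintype p] {ι : Type*} (s : Finset ι)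
    (v w : p → ℂ) (A : ι → Matrix p p ℂ) :
    v ⬝ᵥ ((∑ m ∈ s, A m) *ᵥ w) = ∑ m ∈ s, v ⬝ᵥ (A m *ᵥ w) := by
  simp only [Matrix.mulVec, dotProduct, Matrix.sum_apply, Finset.sum_mul, Finset.mul_sum]
  rw [Finset.sum_congr rfl fun r (_ : r ∈ Finset.univ) =>
    (Finset.sum_comm : ∑ x1 : p, ∑ i ∈ s, v r * (A i r x1 * w x1) = _)]
  rw [Finset.sum_comm]

open Matrix in
lemma mapBlocks_quad {n k : ℕ}
    (T : Matrix (Fin n) (Fin n) ℂ →ₗ[ℂ] Matrix (Fin n) (Fin n) ℂ)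
    (M : Matrix (Fin k × Fin n) (Fin k × Fin n) ℂ) (x : Fin k × Fin n → ℂ) :
    star x ⬝ᵥ (mapBlocks k T M *ᵥ x) =
      ∑ i, ∑ j, star (fun r => x (i, r)) ⬝ᵥ
        (T (Matrix.of fun a b => M (i, a) (j, b)) *ᵥ fun s => x (j, s)) := by
  simp only [mapBlocks, dotProduct, mulVec, Matrix.of_apply, Fintype.sum_prod_type,
    Pi.star_apply, Finset.mul_sum]
  exact Finset.sum_congr rfl fun i _ => Finset.sum_comm

/-- `T` is completely positive iff `∑_{i,j} ⟨cᵢ g, T(aᵢ* aⱼ) cⱼ g⟩ ≥ 0`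
for all finite families `aᵢ, cᵢ` of matrices and all vectors `g`. -/
theorem completelyPositive_iff_quadratic_form (n : ℕ)
    (T : Matrix (Fin n) (Fin n) ℂ →ₗ[ℂ] Matrix (Fin n) (Fin n) ℂ) :
    IsCompletelyPositive T ↔
    (∀ (k : ℕ) (a c : Fin k → Matrix (Fin n) (Fin n) ℂ) (g : Fin n → ℂ),
      0 ≤ ∑ i, ∑ j,
        star (c i *ᵥ g) ⬝ᵥ (T ((a i)ᴴ * a j) *ᵥ (c j *ᵥ g))) := by
  constructor
  · intro hT k a c g
    set B : Matrix (Fin n) (Fin k × Fin n) ℂ := Matrix.of fun t q => a q.1 t q.2 with hB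
    have hM := hT k (Bᴴ * B) (Matrix.posSemidef_conjTranspose_mul_self B)
    have hq := hM.dotProduct_mulVec_nonneg (fun p => (c p.1 *ᵥ g) p.2)
    rw [mapBlocks_quad] at hq
    have hblock : ∀ i j : Fin k,
        (Matrix.of fun r s => (Bᴴ * B) (i, r) (j, s)) = (a i)ᴴ * a j := by
      intro i j
      ext r s
      simp [Matrix.mul_apply, hB, Matrix.conjTranspose_apply]
    simp only [hblock] at hq
    exact hq
  · intro h k M hM
    rcases Nat.eq_zero_or_pos n with hn | hn
    · subst hn
      refine Matrix.PosSemidef.of_dotProduct_mulVec_nonneg ?_ fun x => ?_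
      · ext p q; exact p.2.elim0
      · simp [dotProduct]
    · haveI : NeZero n := ⟨hn.ne'⟩
      apply posSemidef_of_quadratic
      intro x
      rw [mapBlocks_quad]
      obtain ⟨R, hRR, hRH⟩ : ∃ R : Matrix (Fin k × Fin n) (Fin k × Fin n) ℂ,
          R * R = M ∧ R.IsHermitian := by
        open scoped MatrixOrder in
        exact ⟨CFC.sqrt M, CFC.sqrt_mul_sqrt_self M hM.nonneg, (Matrix.nonneg_iff_posSemidef.mp (CFC.sqrt_nonneg M)).1⟩
      set a : Fin k → Fin k → Matrix (Fin n) (Fin n) ℂ :=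
        fun m i => Matrix.of fun t r => R (m, t) (i, r) with ha
      have hdecomp : ∀ i j : Fin k,
          (Matrix.of fun r s => M (i, r) (j, s) : Matrix (Fin n) (Fin n) ℂ)
            = ∑ m, (a m i)ᴴ * a m j := by
        intro i j
        ext r s
        rw [← hRR]
        simp only [Matrix.sum_apply, Matrix.mul_apply, Matrix.of_apply,
          Matrix.conjTranspose_apply, ha, Fintype.sum_prod_type]
        refine Finset.sum_congr rfl fun m _ => Finset.sum_congr rfl fun t _ => ?_
        congr 1
        exact (congrFun (congrFun hRH _) _).symm.trans rfl
      calc (0:ℂ) ≤ ∑ m, ∑ i, ∑ j, star (fun r => x (i, r)) ⬝ᵥ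
            (T ((a m i)ᴴ * a m j) *ᵥ fun s => x (j, s)) := by
            refine Finset.sum_nonneg fun m _ => ?_
            have hcg : ∀ i : Fin k,
                ((Matrix.of fun r (_ : Fin n) => x (i, r)) *ᵥ
                  (fun s => if s = (0 : Fin n) then 1 else 0)) = fun r => x (i, r) := by
              intro i
              funext r
              simp [Matrix.mulVec, dotProduct]
            have := h k (a m) (fun i => Matrix.of fun r (_ : Fin n) => x (i, r))
              (fun s => if s = (0 : Fin n) then 1 else 0)
            simpa only [hcg] using this
        _ = _ := by
            rw [Finset.sum_comm]
            refine Finset.sum_congr rfl fun i _ => ?_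
            rw [Finset.sum_comm]
            refine Finset.sum_congr rfl fun j _ => ?_
            rw [hdecomp, map_sum, dotProduct_sum_mulVec]
end

section
/- Every Hermiticity-preserving linear map T : Mₙ(ℂ) → Mₙ(ℂ) (i.e., T(a*) = T(a)* for all a) can be written as T = T₊ − T₋ where T₊ and T₋ are completely positive maps. -/
open scoped ComplexOrder Matrix

open Matrix in
/-- Map associated to a "Choi matrix" `C`. -/
noncomputable def choiMap {n : ℕ} (C : Matrix (Fin n × Fin n) (Fin n × Fin n) ℂ) :
    Matrix (Fin n) (Fin n) ℂ →ₗ[ℂ] Matrix (Fin n) (Fin n) ℂ where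
  toFun a := Matrix.of fun k l => ∑ i, ∑ j, a i j * C (i, k) (j, l)
  map_add' a b := by
    ext k l
    simp [Matrix.add_apply, add_mul, Finset.sum_add_distrib]
  map_smul' c a := by
    ext k l
    simp [Finset.mul_sum, mul_assoc]

open Matrix in
/-- The Choi matrix of a linear map. -/
noncomputable def choi {n : ℕ}
    (T : Matrix (Fin n) (Fin n) ℂ →ₗ[ℂ] Matrix (Fin n) (Fin n) ℂ) :
    Matrix (Fin n × Fin n) (Fin n × Fin n) ℂ :=
  Matrix.of fun p q => T (Matrix.single p.1 q.1 1) p.2 q.2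

open Matrix in
lemma choiMap_choi {n : ℕ}
    (T : Matrix (Fin n) (Fin n) ℂ →ₗ[ℂ] Matrix (Fin n) (Fin n) ℂ) :
    choiMap (choi T) = T := by
  ext a k l
  simp only [choiMap, choi, LinearMap.coe_mk, AddHom.coe_mk, Matrix.of_apply]
  conv_rhs => rw [Matrix.matrix_eq_sum_single a]
  simp only [map_sum, Matrix.sum_apply]
  refine Finset.sum_congr rfl fun i _ => ?_
  refine Finset.sum_congr rfl fun j _ => ?_
  have h1 : Matrix.single i j (a i j) = a i j • Matrix.single i j 1 := by
    rw [Matrix.smul_single, smul_eq_mul, mul_one]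
  rw [h1, _root_.map_smul, Matrix.smul_apply, smul_eq_mul]

open Matrix in
lemma posSemidef_sum {ι m : Type*} [Fintype m] (s : Finset ι) (f : ι → Matrix m m ℂ)
    (h : ∀ i ∈ s, (f i).PosSemidef) : (∑ i ∈ s, f i).PosSemidef := by
  classical
  induction s using Finset.induction_on with
  | empty => simpa using Matrix.PosSemidef.zero
  | insert _ _ hx ih =>
    rw [Finset.sum_insert hx]
    exact ((h _ (Finset.mem_insert_self _ _)).add
      (ih fun i hi => h i (Finset.mem_insert_of_mem hi)))

lemma sum_swap4 {m : Type*} [Fintype m] (f : m → m → m → m → ℂ) :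
    ∑ i, ∑ j, ∑ a, ∑ b, f i j a b = ∑ a, ∑ b, ∑ j, ∑ i, f i j a b := by
  trans ∑ j, ∑ a, ∑ b, ∑ i, f i j a b
  · rw [Finset.sum_comm]
    refine Finset.sum_congr rfl fun j _ => ?_
    rw [Finset.sum_comm]
    exact Finset.sum_congr rfl fun a _ => Finset.sum_comm
  · rw [Finset.sum_comm]
    exact Finset.sum_congr rfl fun a _ => Finset.sum_comm

open Matrix in
lemma choiMap_cp {n : ℕ} {C : Matrix (Fin n × Fin n) (Fin n × Fin n) ℂ}
    (hC : C.PosSemidef) : IsCompletelyPositive (choiMap C) := by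
  obtain ⟨B, hB⟩ : ∃ B : Matrix (Fin n × Fin n) (Fin n × Fin n) ℂ, C = Bᴴ * B := by
    open MatrixOrder in
    obtain ⟨B, hB⟩ := CStarAlgebra.nonneg_iff_eq_star_mul_self.mp hC.nonneg
    exact ⟨B, hB⟩
  intro k M hM
  set X : (Fin n × Fin n) → Matrix (Fin k × Fin n) (Fin k × Fin n) ℂ :=
    fun r => Matrix.of fun p q => if p.1 = q.1 then star (B r (q.2, p.2)) else 0 with hX
  have key : mapBlocks k (choiMap C) M = ∑ r, X r * M * (X r)ᴴ := by
    ext p q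
    subst hB
    simp only [mapBlocks, choiMap, LinearMap.coe_mk, AddHom.coe_mk, Matrix.of_apply,
      Matrix.sum_apply, Matrix.mul_apply, Matrix.conjTranspose_apply, hX,
      Fintype.sum_prod_type, apply_ite (star : ℂ → ℂ), star_zero, mul_ite, ite_mul,
      mul_zero, zero_mul, Finset.sum_ite_irrel, Finset.sum_const_zero,
      Finset.sum_ite_eq, Finset.sum_ite_eq', Finset.mem_univ, if_true, star_star,
      Finset.mul_sum, Finset.sum_mul]
    rw [sum_swap4]
    refine Finset.sum_congr rfl fun a _ => ?_
    refine Finset.sum_congr rfl fun b _ => ?_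
    refine Finset.sum_congr rfl fun j _ => ?_
    refine Finset.sum_congr rfl fun i _ => ?_
    ring
  rw [key]
  exact posSemidef_sum _ _ fun r _ => hM.mul_mul_conjTranspose_same _

open Matrix in
lemma stdBasisMatrix_conjTranspose' {n : ℕ} (i j : Fin n) :
    (Matrix.single i j (1 : ℂ))ᴴ = Matrix.single j i 1 := by
  ext a b
  simp [Matrix.conjTranspose_apply, Matrix.single, and_comm]

open Matrix in
lemma choi_isHermitian {n : ℕ}
    (T : Matrix (Fin n) (Fin n) ℂ →ₗ[ℂ] Matrix (Fin n) (Fin n) ℂ)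
    (hT : ∀ a : Matrix (Fin n) (Fin n) ℂ, T aᴴ = (T a)ᴴ) :
    (choi T).IsHermitian := by
  refine Matrix.ext fun p q => ?_
  rw [Matrix.conjTranspose_apply]
  show star (choi T q p) = choi T p q
  simp only [choi, Matrix.of_apply]
  have : T (Matrix.single p.1 q.1 (1 : ℂ)) =
      (T (Matrix.single q.1 p.1 1))ᴴ := by
    rw [← hT, stdBasisMatrix_conjTranspose']
  rw [this, Matrix.conjTranspose_apply]

open Matrix in
private theorem hermitian_preserving_eq_sub_of_cp_aux (n : ℕ)
    (T : Matrix (Fin n) (Fin n) ℂ →ₗ[ℂ] Matrix (Fin n) (Fin n) ℂ)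
    (hT : ∀ a : Matrix (Fin n) (Fin n) ℂ, T aᴴ = (T a)ᴴ) :
    ∃ Tp Tm : Matrix (Fin n) (Fin n) ℂ →ₗ[ℂ] Matrix (Fin n) (Fin n) ℂ,
      IsCompletelyPositive Tp ∧ IsCompletelyPositive Tm ∧ T = Tp - Tm := by
  have hH := choi_isHermitian T hT
  set U : Matrix (Fin n × Fin n) (Fin n × Fin n) ℂ := (hH.eigenvectorUnitary : Matrix (Fin n × Fin n) (Fin n × Fin n) ℂ) with hU
  set Cp : Matrix (Fin n × Fin n) (Fin n × Fin n) ℂ :=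
    U * Matrix.diagonal (fun i => ((max (hH.eigenvalues i) 0 : ℝ) : ℂ)) * Uᴴ with hCp
  set Cm : Matrix (Fin n × Fin n) (Fin n × Fin n) ℂ :=
    U * Matrix.diagonal (fun i => ((max (-hH.eigenvalues i) 0 : ℝ) : ℂ)) * Uᴴ with hCm
  have hCpPSD : Cp.PosSemidef := by
    refine Matrix.PosSemidef.mul_mul_conjTranspose_same ?_ U
    refine Matrix.posSemidef_diagonal_iff.mpr fun i => ?_
    exact_mod_cast le_max_right _ _
  have hCmPSD : Cm.PosSemidef := by
    refine Matrix.PosSemidef.mul_mul_conjTranspose_same ?_ U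
    refine Matrix.posSemidef_diagonal_iff.mpr fun i => ?_
    exact_mod_cast le_max_right _ _
  have hsub : Cp - Cm = choi T := by
    rw [hCp, hCm, ← Matrix.sub_mul, ← Matrix.mul_sub, Matrix.diagonal_sub]
    have : (fun i => ((max (hH.eigenvalues i) 0 : ℝ) : ℂ) -
        ((max (-hH.eigenvalues i) 0 : ℝ) : ℂ)) =
        (fun i => ((hH.eigenvalues i : ℝ) : ℂ)) := by
      funext i
      rw [← Complex.ofReal_sub, max_zero_sub_max_neg_zero_eq_self]
    rw [this]
    conv_rhs => rw [hH.spectral_theorem]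
    rfl
  have hCsub : choiMap (Cp - Cm) = choiMap Cp - choiMap Cm := by
    refine LinearMap.ext fun a => ?_
    refine Matrix.ext fun k l => ?_
    simp [choiMap, Matrix.sub_apply, mul_sub, Finset.sum_sub_distrib]
  exact ⟨choiMap Cp, choiMap Cm, choiMap_cp hCpPSD, choiMap_cp hCmPSD, by
    rw [← choiMap_choi T, ← hsub, hCsub]⟩


/-- Every Hermiticity-preserving linear map on `Mₙ(ℂ)` is a difference of two
completely positive maps. -/
theorem hermitian_preserving_eq_sub_of_cp (n : ℕ)
    (T : Matrix (Fin n) (Fin n) ℂ →ₗ[ℂ] Matrix (Fin n) (Fin n) ℂ)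
    (hT : ∀ a : Matrix (Fin n) (Fin n) ℂ, T aᴴ = (T a)ᴴ) :
    ∃ Tp Tm : Matrix (Fin n) (Fin n) ℂ →ₗ[ℂ] Matrix (Fin n) (Fin n) ℂ,
      IsCompletelyPositive Tp ∧ IsCompletelyPositive Tm ∧ T = Tp - Tm := by
  exact hermitian_preserving_eq_sub_of_cp_aux n T hT
end
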